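/- Let R be a commutative noetherian unique factorisation domain and I a nonzero ideal of R. Then the reflexive closure (I^{-1})^{-1} of I equals xR for some x ∈ R, and the module xR/I is pseudo-null. -/

import Mathlib

universe u

/-- An `R`-module `M` is *pseudo-null* if `E^0(N) = E^1(N) = 0` for every submodule `N`
of `M`, where `E^j(N) = Ext_R^j(N, R)`.  `E^0(N) = Hom_R(N, R) = 0` is stated directly
and `E^1(N) = 0` through its standard characterisation: every short exact sequence
`0 → R → E → N → 0` splits. -/
def IsPseudoNull (R : Type u) [Ring R] (M : Type u) [AddCommGroup M] [Module R M] : Prop :=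
  ∀ N : Submodule R M,
    (∀ φ : N →ₗ[R] R, φ = 0) ∧
    (∀ (E : Type u) [AddCommGroup E] [Module R E] (i : R →ₗ[R] E) (π : E →ₗ[R] N),
      Function.Injective i → Function.Surjective π →
      LinearMap.range i = LinearMap.ker π →
      ∃ σ : N →ₗ[R] E, π.comp σ = LinearMap.id)

set_option maxHeartbeats 2000000 in
set_option synthInstance.maxHeartbeats 1000000 in
/-- Let `R` be a commutative noetherian unique factorisation domain and `I`
a nonzero ideal of `R`.  Then the reflexive closure `(I⁻¹)⁻¹` of `I` (computed inside the
fraction field `Q` of `R`, with `J⁻¹ = {q ∈ Q : qJ ⊆ R}`) equals `xR` for some `x ∈ R`,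
and the module `xR/I` is pseudo-null. -/
theorem reflexive_closure_principal_and_pseudoNull {R : Type u} [CommRing R] [IsDomain R]
    [IsNoetherianRing R] [UniqueFactorizationMonoid R] (I : Ideal R) (hI : I ≠ ⊥) :
    ∃ x : R,
      {q : FractionRing R | ∀ y : FractionRing R,
          (∀ a ∈ I, y * algebraMap R (FractionRing R) a ∈
            Set.range (algebraMap R (FractionRing R))) →
          q * y ∈ Set.range (algebraMap R (FractionRing R))}
        = Set.range (fun r : R => algebraMap R (FractionRing R) (x * r)) ∧
      I ≤ Ideal.span {x} ∧
      IsPseudoNull R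
        (↥(Ideal.span {x} : Submodule R R) ⧸
          Submodule.comap (Ideal.span {x} : Submodule R R).subtype I) := by
  classical
  letI : StrongNormalizationMonoid R := UniqueFactorizationMonoid.normalizationMonoid
  letI : StrongNormalizedGCDMonoid R := UniqueFactorizationMonoid.toStrongNormalizedGCDMonoid R
  obtain ⟨s, hs⟩ : I.FG := IsNoetherian.noetherian I
  set x : R := s.gcd id with hxdef
  have hsub : ∀ g ∈ s, g ∈ I := by
    intro g hg; rw [← hs]; exact Ideal.subset_span hg
  have hIle : I ≤ Ideal.span {x} := by
    rw [← hs, Ideal.span_le]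
    intro g hg
    rw [SetLike.mem_coe, Ideal.mem_span_singleton]
    exact Finset.gcd_dvd hg
  have hx_dvd : ∀ a ∈ I, x ∣ a := by
    intro a ha
    exact Ideal.mem_span_singleton.mp (hIle ha)
  have hx0 : x ≠ 0 := by
    intro h
    apply hI
    rw [← hs, Ideal.span_eq_bot]
    intro g hg
    have := Finset.gcd_eq_zero_iff.mp (hxdef ▸ h) g hg
    simpa using this
  -- a nonzero element `a` with `x * a ∈ I`
  obtain ⟨g₀, hg₀I, hg₀0⟩ := Submodule.exists_mem_ne_zero_of_ne_bot hI
  obtain ⟨a, hga⟩ := hx_dvd g₀ hg₀I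
  have haI : x * a ∈ I := hga ▸ hg₀I
  have ha0 : a ≠ 0 := by rintro rfl; exact hg₀0 (by rw [hga, mul_zero])
  -- Key divisibility lemma
  have keyD : ∀ c : R, (∀ b : R, x * b ∈ I → a ∣ b * c) → a ∣ c := by
    intro c hb
    obtain ⟨a', c', ha', hc', hu⟩ := extract_gcd a c
    set g : R := gcd a c with hgdef
    have hg0 : g ≠ 0 := fun h => ha0 (by rw [ha', h, zero_mul])
    have hrel : IsRelPrime a' c' := gcd_isUnit_iff_isRelPrime.mp hu
    have ha'unit : IsUnit a' := by
      have hdvd1 : ∀ gen ∈ s, x * a' ∣ gen := by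
        intro gen hgen
        obtain ⟨b, hbg⟩ := hx_dvd gen (hsub gen hgen)
        have hbI : x * b ∈ I := hbg ▸ hsub gen hgen
        obtain ⟨t, ht⟩ := hb b hbI
        have h2 : a' ∣ b * c' := by
          refine ⟨t, mul_left_cancel₀ hg0 ?_⟩
          calc g * (b * c') = b * c := by rw [hc']; ring
            _ = a * t := ht
            _ = g * (a' * t) := by rw [ha']; ring
        have h3 : a' ∣ b := hrel.dvd_of_dvd_mul_right h2
        rw [hbg]
        exact mul_dvd_mul_left x h3
      have hxa : x * a' ∣ x := Finset.dvd_gcd hdvd1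
      rcases hxa with ⟨t, ht⟩
      refine IsUnit.of_mul_eq_one t (mul_left_cancel₀ hx0 ?_)
      rw [← mul_assoc, ← ht, mul_one]
    obtain ⟨v, hv⟩ := ha'unit.exists_right_inv
    have hag : a ∣ g := ⟨v, by rw [ha', mul_assoc, hv, mul_one]⟩
    exact hag.trans ⟨c', hc'⟩
  refine ⟨x, ?_, hIle, ?_⟩
  · -- set equality
    set Q := FractionRing R
    set ι := algebraMap R Q with hιdef
    have hinj : Function.Injective ι := IsFractionRing.injective R Q
    have hιx0 : ι x ≠ 0 := fun h => hx0 (hinj (by rw [h, map_zero]))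
    ext q
    simp only [Set.mem_setOf_eq, Set.mem_range]
    constructor
    · intro hq
      have hy : ∀ b ∈ I, (ι x)⁻¹ * ι b ∈ Set.range ι := by
        intro b hb
        obtain ⟨t, ht⟩ := hx_dvd b hb
        refine ⟨t, ?_⟩
        rw [ht, map_mul, ← mul_assoc, inv_mul_cancel₀ hιx0, one_mul]
      obtain ⟨r, hr⟩ := hq (ι x)⁻¹ hy
      refine ⟨r, ?_⟩
      rw [map_mul, hr, mul_comm (ι x), mul_assoc, inv_mul_cancel₀ hιx0, mul_one]
    · rintro ⟨r, hr⟩ y hy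
      obtain ⟨⟨c, d⟩, hcd⟩ := IsLocalization.surj (nonZeroDivisors R) y
      simp only at hcd
      have hd0 : (d : R) ≠ 0 := nonZeroDivisors.ne_zero d.2
      have hιd0 : ι (d : R) ≠ 0 := fun h => hd0 (hinj (by rw [h, map_zero]))
      have hdvd : ∀ gen ∈ s, (d : R) ∣ c * gen := by
        intro gen hgen
        obtain ⟨t, ht⟩ := hy gen (hsub gen hgen)
        refine ⟨t, hinj ?_⟩
        rw [map_mul, map_mul]
        calc ι c * ι gen = y * ι (d : R) * ι gen := by rw [hcd]
          _ = (y * ι gen) * ι (d : R) := by ring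
          _ = ι t * ι (d : R) := by rw [ht]
          _ = ι (d : R) * ι t := by ring
      have hdx : (d : R) ∣ c * x := by
        have h1 : (d : R) ∣ s.gcd (fun g => c * id g) := Finset.dvd_gcd hdvd
        rw [Finset.gcd_mul_left] at h1
        exact h1.trans (mul_dvd_mul_right (normalize_dvd_iff.mpr dvd_rfl) x)
      obtain ⟨u, hu⟩ := hdx
      refine ⟨r * u, ?_⟩
      have hcancel : ι (r * u) * ι (d : R) = q * y * ι (d : R) := by
        calc ι (r * u) * ι (d : R) = ι (x * r * c) := by
              rw [← map_mul]; exact congrArg ι (by linear_combination (-r) * hu)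
          _ = ι (x * r) * ι c := by rw [← map_mul]
          _ = ι (x * r) * (y * ι (d : R)) := by rw [hcd]
          _ = q * y * ι (d : R) := by rw [hr]; ring
      exact mul_right_cancel₀ hιd0 hcancel
  · -- pseudo-null
    intro N
    have keyAnn : ∀ b : R, x * b ∈ I →
        ∀ m : (↥(Ideal.span {x} : Submodule R R) ⧸
          Submodule.comap (Ideal.span {x} : Submodule R R).subtype I), b • m = 0 := by
      intro b hb m
      obtain ⟨⟨v, hv⟩, rfl⟩ := Submodule.Quotient.mk_surjective _ m
      rw [← Submodule.Quotient.mk_smul, Submodule.Quotient.mk_eq_zero]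
      have hbv : b * v ∈ I := by
        obtain ⟨t, ht⟩ := Ideal.mem_span_singleton.mp hv
        have h2 : b * v = (x * b) * t := by rw [ht]; ring
        rw [h2]
        exact Ideal.mul_mem_right _ _ hb
      simpa [Submodule.mem_comap, smul_eq_mul] using hbv
    have hAnnN : ∀ b : R, x * b ∈ I → ∀ n : N, b • n = 0 := by
      intro b hb n
      refine Subtype.ext ?_
      rw [Submodule.coe_smul]
      simpa using keyAnn b hb (n : _)
    constructor
    · intro φ
      ext n
      have h1 : a * φ n = 0 := by
        rw [← smul_eq_mul, ← map_smul, hAnnN a haI n, map_zero]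
      rcases mul_eq_zero.mp h1 with h | h
      · exact absurd h ha0
      · simpa using h
    · intro E _ _ i π hinj2 hsurj hrange
      have hmem : ∀ b : R, x * b ∈ I → ∀ e : E, b • e ∈ LinearMap.range i := by
        intro b hb e
        rw [hrange, LinearMap.mem_ker, map_smul]
        exact hAnnN b hb (π e)
      set eqv := LinearEquiv.ofInjective i hinj2 with heqv
      set mapA : E →ₗ[R] LinearMap.range i :=
        LinearMap.codRestrict (LinearMap.range i) (a • (LinearMap.id : E →ₗ[R] E))
          (fun e => hmem a haI e) with hmapA
      set sa : E →ₗ[R] R := eqv.symm.toLinearMap.comp mapA with hsadef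
      have hsa : ∀ e, i (sa e) = a • e := by
        intro e
        have h1 : i (sa e) = ((eqv (sa e) : LinearMap.range i) : E) :=
          (LinearEquiv.ofInjective_apply i (sa e)).symm
        rw [h1]
        show ((eqv (eqv.symm (mapA e))) : E) = a • e
        rw [eqv.apply_symm_apply]
        rfl
      have hdvd : ∀ e : E, a ∣ sa e := by
        intro e
        apply keyD
        intro b hb
        obtain ⟨t, ht⟩ := hmem b hb e
        refine ⟨t, hinj2 ?_⟩
        show i (b • sa e) = i (a • t)
        rw [map_smul, map_smul, hsa, ht, smul_smul, smul_smul, mul_comm b a]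
      choose τf hτf using hdvd
      have hτ_eq : ∀ e t, sa e = a * t → τf e = t := fun e t h =>
        mul_left_cancel₀ ha0 ((hτf e).symm.trans h)
      have τadd : ∀ e e', τf (e + e') = τf e + τf e' := by
        intro e e'
        apply mul_left_cancel₀ ha0
        rw [← hτf, map_add, hτf e, hτf e']; ring
      have τsmul : ∀ (r : R) (e : E), τf (r • e) = r * τf e := by
        intro r e
        apply mul_left_cancel₀ ha0
        rw [← hτf, map_smul, hτf e, smul_eq_mul]; ring
      let τ : E →ₗ[R] R :=
        { toFun := τf
          map_add' := τadd
          map_smul' := fun r e => by simpa using τsmul r e }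
      have hτi : ∀ r : R, τ (i r) = r := by
        intro r
        have h1 : sa (i r) = a * r := hinj2 (by rw [hsa, ← smul_eq_mul, map_smul])
        exact hτ_eq (i r) r h1
      set ρ : E →ₗ[R] E := LinearMap.id - i.comp τ with hρdef
      have hπi : ∀ r : R, π (i r) = 0 := by
        intro r
        have h : i r ∈ LinearMap.ker π := hrange ▸ LinearMap.mem_range_self i r
        exact LinearMap.mem_ker.mp h
      have hρi : ∀ r : R, ρ (i r) = 0 := by
        intro r
        show i r - i.comp τ (i r) = 0
        rw [LinearMap.comp_apply, hτi r, sub_self]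
      have hρker : ∀ e, π e = 0 → ρ e = 0 := by
        intro e he
        have h : e ∈ LinearMap.range i := by rw [hrange]; exact LinearMap.mem_ker.mpr he
        obtain ⟨r, rfl⟩ := h
        exact hρi r
      have hρcongr : ∀ e e', π e = π e' → ρ e = ρ e' := by
        intro e e' h
        have h2 := hρker (e - e') (by rw [map_sub, h, sub_self])
        rw [map_sub] at h2
        exact sub_eq_zero.mp h2
      choose sec hsec using hsurj
      let σ : N →ₗ[R] E :=
        { toFun := fun n => ρ (sec n)
          map_add' := by
            intro n m
            rw [← map_add ρ]
            have h1 : π (sec n + sec m) = n + m := by rw [map_add, hsec, hsec]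
            exact hρcongr _ _ ((hsec (n + m)).trans h1.symm)
          map_smul' := by
            intro r n
            simp only [RingHom.id_apply]
            rw [← map_smul ρ]
            have h1 : π (r • sec n) = r • n := by rw [map_smul, hsec]
            exact hρcongr _ _ ((hsec (r • n)).trans h1.symm) }
      refine ⟨σ, ?_⟩
      apply LinearMap.ext
      intro n
      show π (ρ (sec n)) = n
      have : π (ρ (sec n)) = π (sec n) - π (i (τ (sec n))) := by
        rw [hρdef]
        simp [map_sub]
      rw [this, hπi, sub_zero, hsec]
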